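/- Completeness of the classical implicative-disjunctive propositional calculus: an implicative-disjunctive formula A is a theorem of the Hilbert system with axiom schemes Ax1–Ax6 and modus ponens if and only if A is a tautology under Boolean valuations. -/

import Mathlib

inductive IDFrm where
  | atom : Nat → IDFrm
  | imp : IDFrm → IDFrm → IDFrm
  | or : IDFrm → IDFrm → IDFrm

inductive IDDeriv : Set IDFrm → IDFrm → Prop where
  | hyp {K A} : A ∈ K → IDDeriv K A
  | ax1 {K} (A B : IDFrm) : IDDeriv K (A.imp (B.imp A))
  | ax2 {K} (A B C : IDFrm) : IDDeriv K ((A.imp (B.imp C)).imp ((A.imp B).imp (A.imp C)))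
  | ax3 {K} (A B : IDFrm) : IDDeriv K (((A.imp B).imp A).imp A)
  | ax4 {K} (A B : IDFrm) : IDDeriv K (A.imp (A.or B))
  | ax5 {K} (A B : IDFrm) : IDDeriv K (A.imp (B.or A))
  | ax6 {K} (A B C : IDFrm) : IDDeriv K ((A.imp C).imp ((B.imp C).imp ((A.or B).imp C)))
  | mp {K A B} : IDDeriv K (A.imp B) → IDDeriv K A → IDDeriv K B

def IDFrm.eval (v : Nat → Bool) : IDFrm → Bool
  | .atom n => v n
  | .imp A B => !(A.eval v) || B.eval v
  | .or A B => A.eval v || B.eval v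

namespace IDAux

open IDFrm

lemma weaken {K K' : Set IDFrm} {A : IDFrm} (h : K ⊆ K') (d : IDDeriv K A) :
    IDDeriv K' A := by
  induction d with
  | hyp hm => exact .hyp (h hm)
  | ax1 A B => exact .ax1 A B
  | ax2 A B C => exact .ax2 A B C
  | ax3 A B => exact .ax3 A B
  | ax4 A B => exact .ax4 A B
  | ax5 A B => exact .ax5 A B
  | ax6 A B C => exact .ax6 A B C
  | mp _ _ ih1 ih2 => exact .mp ih1 ih2

lemma idd {K : Set IDFrm} (A : IDFrm) : IDDeriv K (A.imp A) :=
  .mp (.mp (.ax2 A (A.imp A) A) (.ax1 _ _)) (.ax1 _ _)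

lemma ded {K : Set IDFrm} {A B : IDFrm} (d : IDDeriv (insert A K) B) :
    IDDeriv K (A.imp B) := by
  induction d with
  | hyp hm =>
    rcases Set.mem_insert_iff.1 hm with rfl | hm
    · exact idd _
    · exact .mp (.ax1 _ _) (.hyp hm)
  | ax1 A B => exact .mp (.ax1 _ _) (.ax1 A B)
  | ax2 A B C => exact .mp (.ax1 _ _) (.ax2 A B C)
  | ax3 A B => exact .mp (.ax1 _ _) (.ax3 A B)
  | ax4 A B => exact .mp (.ax1 _ _) (.ax4 A B)
  | ax5 A B => exact .mp (.ax1 _ _) (.ax5 A B)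
  | ax6 A B C => exact .mp (.ax1 _ _) (.ax6 A B C)
  | mp _ _ ih1 ih2 => exact .mp (.mp (.ax2 _ _ _) ih1) ih2

lemma unded {K : Set IDFrm} {A B : IDFrm} (d : IDDeriv K (A.imp B)) :
    IDDeriv (insert A K) B :=
  .mp (weaken (Set.subset_insert _ _) d) (.hyp (Set.mem_insert _ _))

lemma comp {K : Set IDFrm} {A B C : IDFrm} (h1 : IDDeriv K (A.imp B))
    (h2 : IDDeriv K (B.imp C)) : IDDeriv K (A.imp C) :=
  ded (.mp (weaken (Set.subset_insert _ _) h2) (unded h1))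

lemma orElim {K : Set IDFrm} {A B C : IDFrm} (h : IDDeriv K (A.or B))
    (h1 : IDDeriv K (A.imp C)) (h2 : IDDeriv K (B.imp C)) : IDDeriv K C :=
  .mp (.mp (.mp (.ax6 A B C) h1) h2) h

/-- generalized excluded middle: `A ∨ (A → B)` -/
lemma em {K : Set IDFrm} (A B : IDFrm) : IDDeriv K (A.or (A.imp B)) := by
  have h1 : IDDeriv (insert ((A.or (A.imp B)).imp B) K) (A.or (A.imp B)) := by
    have hab : IDDeriv (insert ((A.or (A.imp B)).imp B) K) (A.imp B) :=
      comp (.ax4 _ _) (.hyp (Set.mem_insert _ _))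
    exact .mp (.ax5 _ _) hab
  exact .mp (.ax3 (A.or (A.imp B)) B) (ded h1)

def atomsOf : IDFrm → List Nat
  | .atom n => [n]
  | .imp A B => atomsOf A ++ atomsOf B
  | .or A B => atomsOf A ++ atomsOf B

/-- Kalmár-style lemma, modulo disjunction with the goal `G`. -/
lemma kalmar {K : Set IDFrm} (G : IDFrm) (v : Nat → Bool) (B : IDFrm)
    (H : ∀ p ∈ atomsOf B, (v p = true → IDFrm.atom p ∈ K) ∧
      (v p = false → (IDFrm.atom p).imp G ∈ K)) :
    (B.eval v = true → IDDeriv K (B.or G)) ∧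
      (B.eval v = false → ∀ Q, IDDeriv K ((B.imp Q).or G)) := by
  induction B with
  | atom p =>
    have hp := H p (by simp [atomsOf])
    constructor
    · intro ht
      exact .mp (.ax4 _ _) (.hyp (hp.1 ht))
    · intro hf Q
      refine orElim (em (IDFrm.atom p) Q) ?_ (.ax4 _ _)
      exact comp (.hyp (hp.2 hf)) (.ax5 _ _)
  | or B C ihB ihC =>
    have HB := fun p (hp : p ∈ atomsOf B) => H p (List.mem_append_left _ hp)
    have HC := fun p (hp : p ∈ atomsOf C) => H p (List.mem_append_right _ hp)
    constructor
    · intro ht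
      simp only [IDFrm.eval, Bool.or_eq_true] at ht
      rcases ht with ht | ht
      · exact orElim ((ihB HB).1 ht) (comp (.ax4 B C) (.ax4 _ _)) (.ax5 _ _)
      · exact orElim ((ihC HC).1 ht) (comp (.ax5 C B) (.ax4 _ _)) (.ax5 _ _)
    · intro hf Q
      simp only [IDFrm.eval, Bool.or_eq_false_iff] at hf
      have hB := (ihB HB).2 hf.1 Q
      have hC := (ihC HC).2 hf.2 Q
      refine orElim hB (ded ?_) (.ax5 _ _)
      refine orElim (weaken (Set.subset_insert _ _) hC) (ded ?_) (.ax5 _ _)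
      refine .mp (.ax4 _ _) ?_
      exact .mp (.mp (.ax6 B C Q) (.hyp (Set.mem_insert_of_mem _ (Set.mem_insert _ _))))
        (.hyp (Set.mem_insert _ _))
  | imp B C ihB ihC =>
    have HB := fun p (hp : p ∈ atomsOf B) => H p (List.mem_append_left _ hp)
    have HC := fun p (hp : p ∈ atomsOf C) => H p (List.mem_append_right _ hp)
    constructor
    · intro ht
      simp only [IDFrm.eval, Bool.or_eq_true, Bool.not_eq_true'] at ht
      rcases ht with ht | ht
      · exact (ihB HB).2 ht C
      · exact orElim ((ihC HC).1 ht) (comp (.ax1 C B) (.ax4 _ _)) (.ax5 _ _)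
    · intro hf Q
      simp only [IDFrm.eval, Bool.or_eq_false_iff, Bool.not_eq_false'] at hf
      have hB := (ihB HB).1 hf.1
      have hC := (ihC HC).2 hf.2 Q
      refine orElim hB (ded ?_) (.ax5 _ _)
      refine orElim (weaken (Set.subset_insert _ _) hC) (ded ?_) (.ax5 _ _)
      refine .mp (.ax4 _ _) (ded ?_)
      refine .mp (.hyp (Set.mem_insert_of_mem _ (Set.mem_insert _ _))) ?_
      exact .mp (.hyp (Set.mem_insert _ _))
        (.hyp (Set.mem_insert_of_mem _ (Set.mem_insert_of_mem _ (Set.mem_insert _ _))))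

def hyps (G : IDFrm) (v : Nat → Bool) : List Nat → Set IDFrm
  | [] => ∅
  | p :: l => insert (if v p then IDFrm.atom p else (IDFrm.atom p).imp G) (hyps G v l)

lemma hyps_mem {G : IDFrm} {v : Nat → Bool} {l : List Nat} {p : Nat} (hp : p ∈ l) :
    (if v p then IDFrm.atom p else (IDFrm.atom p).imp G) ∈ hyps G v l := by
  induction l with
  | nil => simp at hp
  | cons q l ih =>
    rcases List.mem_cons.1 hp with rfl | hp
    · exact Set.mem_insert _ _
    · exact Set.mem_insert_of_mem _ (ih hp)

lemma hyps_congr {G : IDFrm} {v w : Nat → Bool} {l : List Nat}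
    (h : ∀ p ∈ l, v p = w p) : hyps G v l = hyps G w l := by
  induction l with
  | nil => rfl
  | cons q l ih =>
    simp only [hyps, h q List.mem_cons_self, ih fun p hp => h p (List.mem_cons_of_mem _ hp)]

lemma elim_atoms (A : IDFrm) (l : List Nat) (hnd : l.Nodup)
    (h : ∀ v : Nat → Bool, IDDeriv (hyps A v l) A) : IDDeriv ∅ A := by
  induction l with
  | nil => exact h (fun _ => true)
  | cons p l ih =>
    rcases List.nodup_cons.1 hnd with ⟨hpl, hnd'⟩
    refine ih hnd' (fun v => ?_)
    have e1 : hyps A (Function.update v p true) l = hyps A v l :=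
      hyps_congr fun q hq => Function.update_of_ne (ne_of_mem_of_not_mem hq hpl) _ _
    have e0 : hyps A (Function.update v p false) l = hyps A v l :=
      hyps_congr fun q hq => Function.update_of_ne (ne_of_mem_of_not_mem hq hpl) _ _
    have d1 := h (Function.update v p true)
    have d0 := h (Function.update v p false)
    simp only [hyps, Function.update_self, if_true, if_false, e1, e0] at d1 d0
    exact .mp (ded d0) (ded d1)

lemma sound {K : Set IDFrm} {A : IDFrm} (d : IDDeriv K A) (v : Nat → Bool)
    (hK : ∀ B ∈ K, IDFrm.eval v B = true) : IDFrm.eval v A = true := by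
  induction d with
  | hyp hm => exact hK _ hm
  | ax1 A B =>
    simp only [IDFrm.eval]
    cases hA : IDFrm.eval v A <;> cases hB : IDFrm.eval v B <;> simp
  | ax2 A B C =>
    simp only [IDFrm.eval]
    cases hA : A.eval v <;> cases hB : B.eval v <;> cases hC : C.eval v <;> simp
  | ax3 A B =>
    simp only [IDFrm.eval]
    cases hA : A.eval v <;> cases hB : B.eval v <;> simp
  | ax4 A B =>
    simp only [IDFrm.eval]
    cases hA : IDFrm.eval v A <;> simp
  | ax5 A B =>
    simp only [IDFrm.eval]
    cases hA : IDFrm.eval v A <;> simp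
  | ax6 A B C =>
    simp only [IDFrm.eval]
    cases hA : A.eval v <;> cases hB : B.eval v <;> cases hC : C.eval v <;> simp
  | mp _ _ ih1 ih2 =>
    simp only [IDFrm.eval, ih2, Bool.or_eq_true] at ih1
    simpa using ih1

end IDAux

theorem stmt17 (A : IDFrm) :
    IDDeriv ∅ A ↔ ∀ v : Nat → Bool, A.eval v = true := by
  constructor
  · intro d v
    exact IDAux.sound d v (by simp)
  · intro htaut
    refine IDAux.elim_atoms A (IDAux.atomsOf A).dedup (List.nodup_dedup _) (fun v => ?_)
    have H : ∀ p ∈ IDAux.atomsOf A,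
        (v p = true → IDFrm.atom p ∈ IDAux.hyps A v (IDAux.atomsOf A).dedup) ∧
        (v p = false → (IDFrm.atom p).imp A ∈ IDAux.hyps A v (IDAux.atomsOf A).dedup) := by
      intro p hp
      have hm := IDAux.hyps_mem (G := A) (v := v) (List.mem_dedup.2 hp)
      constructor
      · intro ht; rw [ht] at hm; simpa using hm
      · intro hf; rw [hf] at hm; simpa using hm
    have hk := (IDAux.kalmar A v A H).1 (htaut v)
    exact IDAux.orElim hk (IDAux.idd A) (IDAux.idd A)
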